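/- Greedy factorization lemma: let $u \ge 2$ be a real number and let $m$ be a positive integer with $m \le u^2$ whose largest prime factor is at most $u$. Then there exist positive integers $v_1, v_2, v_3$ with $m = v_1 v_2 v_3$ and $\max(v_1, v_2, v_3) \le u$. -/

import Mathlib

/-- Greedy factorization lemma: if `m ≤ u²` is a positive integer all of whose prime
factors are at most `u` (with `u ≥ 2` real), then `m = v₁v₂v₃` with each `vᵢ ≤ u`. -/
theorem greedy_factorization (u : ℝ) (hu : 2 ≤ u) (m : ℕ) (hm : 0 < m)
    (hmu : (m : ℝ) ≤ u ^ 2)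
    (hsmooth : ∀ p : ℕ, p.Prime → p ∣ m → (p : ℝ) ≤ u) :
    ∃ v₁ v₂ v₃ : ℕ, 0 < v₁ ∧ 0 < v₂ ∧ 0 < v₃ ∧ m = v₁ * v₂ * v₃ ∧
      (v₁ : ℝ) ≤ u ∧ (v₂ : ℝ) ≤ u ∧ (v₃ : ℝ) ≤ u := by
  have hu0 : (0:ℝ) < u := by linarith
  set S : Finset ℕ := m.divisors.filter (fun d => (d : ℝ) ≤ u) with hS
  have h1S : 1 ∈ S := by
    simp [hS, Nat.mem_divisors, hm.ne']
    linarith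
  have hSne : S.Nonempty := ⟨1, h1S⟩
  set d : ℕ := S.max' hSne with hd
  have hdS : d ∈ S := S.max'_mem hSne
  have hddvd : d ∣ m := (Nat.mem_divisors.1 (Finset.mem_filter.1 hdS).1).1
  have hdu : (d : ℝ) ≤ u := (Finset.mem_filter.1 hdS).2
  have hdpos : 0 < d := Nat.pos_of_dvd_of_pos hddvd hm
  have hmax : ∀ e : ℕ, e ∣ m → (e : ℝ) ≤ u → e ≤ d := fun e he heu =>
    S.le_max' e (Finset.mem_filter.2 ⟨Nat.mem_divisors.2 ⟨he, hm.ne'⟩, heu⟩)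
  obtain ⟨k, hk⟩ := hddvd
  have hkpos : 0 < k := by
    rcases Nat.eq_zero_or_pos k with h | h
    · simp [h] at hk; omega
    · exact h
  rcases eq_or_lt_of_le (show 1 ≤ k by omega) with h1 | hk1
  · refine ⟨d, 1, 1, hdpos, one_pos, one_pos, ?_, hdu, by norm_num; linarith, by norm_num; linarith⟩
    simp [hk, ← h1]
  · -- k > 1, take p = k.minFac
    set p := k.minFac with hp
    have hpp : p.Prime := Nat.minFac_prime (by omega)
    have hpk : p ∣ k := Nat.minFac_dvd k
    have hpm : p ∣ m := hk ▸ Dvd.dvd.mul_left hpk d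
    have hpu : (p : ℝ) ≤ u := hsmooth p hpp hpm
    obtain ⟨t, ht⟩ := hpk
    have hdpm : m = d * p * t := by rw [hk, ht]; ring
    have htpos : 0 < t := by
      rcases Nat.eq_zero_or_pos t with h | h
      · rw [h, mul_zero] at hdpm; omega
      · exact h
    have hdpgt : u < (d * p : ℕ) := by
      by_contra hle
      push_neg at hle
      have := hmax (d * p) ⟨t, hdpm⟩ hle
      have : d * p ≤ d := this
      nlinarith [hpp.two_le, hdpos]
    have htu : (t : ℝ) ≤ u := by
      have hmr : (m : ℝ) = (d * p : ℕ) * t := by exact_mod_cast hdpm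
      by_contra hgt
      push_neg at hgt
      have : u * u < (d * p : ℕ) * t := by
        apply mul_lt_mul' hdpgt.le hgt hu0.le
        exact_mod_cast Nat.mul_pos hdpos hpp.pos
      nlinarith
    refine ⟨d, p, t, hdpos, hpp.pos, htpos, hdpm, hdu, hpu, htu⟩
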